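/- Let A ∈ GL₂ℤ and let v, v' ∈ ℤ² each satisfy ℤv + ℤ(Av) = ℤ² and ℤv' + ℤ(Av') = ℤ². Then the generating pairs ((v, 0), ((0,0), 1)) and ((v', 0), ((0,0), 1)) of G_A = ℤ² ⋊_A ℤ are Nielsen equivalent if and only if v' = Aᵏ v or v' = −Aᵏ v for some k ∈ ℤ, i.e., if and only if v and v' lie in the same orbit of the subgroup of GL₂ℤ generated by A and −Id. -/

import Mathlib

open Matrix LaurentPolynomial

abbrev GL2Z := GL (Fin 2) ℤ

/-- The automorphism of `ℤ²` induced by `A ∈ GL₂ℤ`. -/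
def glToAddAut (A : GL2Z) : (Fin 2 → ℤ) ≃+ (Fin 2 → ℤ) :=
  (Matrix.GeneralLinearGroup.toLin A).toLinearEquiv.toAddEquiv

/-- The action of `ℤ` on `ℤ²` with `1` acting as `A`. -/
def phiA (A : GL2Z) : Multiplicative ℤ →* MulAut (Multiplicative (Fin 2 → ℤ)) :=
  zpowersHom _ (AddEquiv.toMultiplicative (glToAddAut A))

/-- `G_A = ℤ² ⋊_A ℤ`. -/
abbrev GA (A : GL2Z) := (Multiplicative (Fin 2 → ℤ)) ⋊[phiA A] (Multiplicative ℤ)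

-- generic zpowersHom application lemma
lemma zpowTM {M : Type*} [AddCommGroup M] (e : M ≃+ M) (f : ℤ → M → M)
    (hf0 : ∀ x, f 0 x = x) (hf1 : ∀ k x, f (k+1) x = e (f k x)) (k : ℤ) (x : M) :
    (zpowersHom _ (AddEquiv.toMultiplicative e) (.ofAdd k) (.ofAdd x) : Multiplicative M)
      = .ofAdd (f k x) := by
  rw [zpowersHom_apply, toAdd_ofAdd]
  induction k using Int.induction_on with
  | zero => simp [hf0]
  | succ k ih =>
      have h1 : ((k : ℤ) + 1) = 1 + k := by ring
      rw [h1, _root_.zpow_add, zpow_one, MulAut.mul_apply, ih]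
      rw [show f (1 + k) = f (k + 1) by rw [add_comm], hf1]
      rfl
  | pred k ih =>
      have h1 : (-(k : ℤ) - 1) = -1 + -k := by ring
      have h2 : f (-k) x = e (f (-(k:ℤ) - 1) x) := by
        rw [← hf1]; norm_num
      rw [h1, _root_.zpow_add, _root_.zpow_neg_one, MulAut.mul_apply, ih, h2]
      rw [show (-1 + -(k:ℤ)) = -(k:ℤ) - 1 by ring, MulAut.inv_def]
      exact (MulEquiv.symm_apply_eq _).2 rfl

lemma glToAddAut_apply (A : GL2Z) (x : Fin 2 → ℤ) :
    glToAddAut A x = (A : Matrix (Fin 2) (Fin 2) ℤ).mulVec x := by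
  show (Matrix.GeneralLinearGroup.toLin A).toLinearEquiv.toAddEquiv x = _
  rw [LinearEquiv.coe_toAddEquiv]
  exact (Matrix.GeneralLinearGroup.toLin_apply A x).trans (Matrix.mulVecLin_apply _ _)

lemma phiA_apply (A : GL2Z) (k : ℤ) (x : Fin 2 → ℤ) :
    phiA A (.ofAdd k) (.ofAdd x)
      = .ofAdd (((A ^ k : GL2Z) : Matrix (Fin 2) (Fin 2) ℤ).mulVec x) := by
  refine zpowTM (glToAddAut A) (fun k x => ((A ^ k : GL2Z) : Matrix (Fin 2) (Fin 2) ℤ).mulVec x)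
    (fun x => by simp) (fun k x => ?_) k x
  show ((A ^ (k+1) : GL2Z) : Matrix (Fin 2) (Fin 2) ℤ).mulVec x = _
  rw [glToAddAut_apply, Matrix.mulVec_mulVec, show ((k:ℤ) + 1) = 1 + k by ring, _root_.zpow_add,
    zpow_one, Units.val_mul]

abbrev Lam := LaurentPolynomial ℤ

noncomputable def tUnit : Lamˣ :=
  ⟨T 1, T (-1), by rw [← T_add]; norm_num, by rw [← T_add]; norm_num⟩

noncomputable def tEquiv : (Lam × Lam) ≃+ (Lam × Lam) :=
  AddEquiv.prodCongr (DistribMulAction.toAddEquiv Lam tUnit) (DistribMulAction.toAddEquiv Lam tUnit)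

noncomputable def psi : Multiplicative ℤ →* MulAut (Multiplicative (Lam × Lam)) :=
  zpowersHom _ (AddEquiv.toMultiplicative tEquiv)

abbrev Gp := (Multiplicative (Lam × Lam)) ⋊[psi] (Multiplicative ℤ)

lemma psi_apply (k : ℤ) (x : Lam × Lam) :
    psi (.ofAdd k) (.ofAdd x) = .ofAdd (T k * x.1, T k * x.2) := by
  refine zpowTM tEquiv (fun k x => (T k * x.1, T k * x.2)) (fun x => by simp) (fun k x => ?_) k x
  show _ = (tUnit • (T k * x.1), tUnit • (T k * x.2))
  have : (tUnit : Lam) = T 1 := rfl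
  simp only [Units.smul_def, this, ← mul_assoc, ← T_add]
  norm_num [add_comm]

noncomputable def theta (A : GL2Z) : Lam →ₐ[ℤ] Matrix (Fin 2) (Fin 2) ℤ :=
  AddMonoidAlgebra.lift ℤ _ ℤ ((Units.coeHom _).comp (zpowersHom GL2Z A))

lemma theta_T (A : GL2Z) (k : ℤ) : theta A (T k) = ((A ^ k : GL2Z) : Matrix (Fin 2) (Fin 2) ℤ) := by
  rw [theta, LaurentPolynomial.T]
  rw [show (AddMonoidAlgebra.single k (1:ℤ)) = AddMonoidAlgebra.single k (1:ℤ) from rfl,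
    AddMonoidAlgebra.lift_single]
  simp

open Polynomial in
lemma T_sub_one_ne_zero : (T 1 - 1 : Lam) ≠ 0 := by
  intro h
  have h2 : (T 1 : Lam) = 1 := by linear_combination h
  have := congrArg (fun p : Lam => p.coeff 0) h2
  simp only [LaurentPolynomial.T, AddMonoidAlgebra.one_def, AddMonoidAlgebra.coeff_single] at this
  rw [Finsupp.single_apply, Finsupp.single_apply] at this
  simp at this

open Polynomial in
lemma lam_unit {p q : Lam} (h : p * q = 1) : ∃ k : ℤ, p = T k ∨ p = -T k := by
  obtain ⟨n, F, hF⟩ := p.exists_T_pow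
  obtain ⟨m, G, hG⟩ := q.exists_T_pow
  have hFG : F * G = X ^ (n + m) := by
    apply Polynomial.toLaurent_injective
    rw [_root_.map_mul, hF, hG, Polynomial.toLaurent_X_pow]
    rw [show p * T n * (q * T m) = (p * q) * (T n * T m) by ring, h, one_mul, ← T_add]
    norm_num
  have hdvd : F ∣ X ^ (n + m) := ⟨G, hFG.symm⟩
  obtain ⟨i, _, hass⟩ := (dvd_prime_pow Polynomial.prime_X (n + m)).1 hdvd
  obtain ⟨u, hu⟩ := hass
  obtain ⟨r, hr, hCr⟩ := Polynomial.isUnit_iff.1 u.isUnit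
  have hp : p = Polynomial.toLaurent F * T (-(n:ℤ)) := by
    rw [hF]; rw [mul_assoc, ← T_add]; norm_num
  rcases Int.isUnit_iff.1 hr with h1 | h1
  · refine ⟨(i:ℤ) - n, Or.inl ?_⟩
    have hF' : F = X ^ i := by
      have := hu.symm
      rw [← hCr, h1, _root_.map_one, mul_one] at this
      exact this.symm
    rw [hp, hF', Polynomial.toLaurent_X_pow, ← T_add]
    norm_num [sub_eq_add_neg]
  · refine ⟨(i:ℤ) - n, Or.inr ?_⟩
    have hF' : F = -X ^ i := by
      have := hu.symm
      rw [← hCr, h1] at this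
      have h3 : F * (-1) = X ^ i := by
        rw [hu.symm]; congr 1; rw [← hCr, h1]; simp
      linear_combination -h3
    rw [hp, hF', map_neg, Polynomial.toLaurent_X_pow, neg_mul, ← T_add]
    norm_num [sub_eq_add_neg]

/-- Nielsen equivalence of ordered generating `n`-tuples: the two induced epimorphisms
from the free group differ by precomposition with an automorphism. -/
def NielsenEquiv {G : Type*} [Group G] {n : ℕ} (S T : Fin n → G) : Prop :=
  ∃ φ : FreeGroup (Fin n) ≃* FreeGroup (Fin n),
    (FreeGroup.lift S).comp φ.toMonoidHom = FreeGroup.lift T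

namespace NEproof
variable (A : GL2Z) (v v' : Fin 2 → ℤ)

abbrev Sgen : Fin 2 → GA A :=
  ![⟨Multiplicative.ofAdd v, 1⟩, ⟨1, Multiplicative.ofAdd 1⟩]

-- the free group on two generators
local notation "F2" => FreeGroup (Fin 2)

noncomputable def nu : F2 →* F2 := FreeGroup.lift ![(FreeGroup.of 0)⁻¹, FreeGroup.of 1]

lemma nu_nu : (nu).comp (nu) = MonoidHom.id F2 := by
  apply FreeGroup.ext_hom
  intro i
  fin_cases i <;> simp [nu]

noncomputable def invAut : F2 ≃* F2 := MonoidHom.toMulEquiv nu nu nu_nu nu_nu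

lemma Sgen_zero : Sgen A v 0 = SemidirectProduct.inl (Multiplicative.ofAdd v) := by
  ext <;> rfl

lemma Sgen_one : Sgen A v 1 = SemidirectProduct.inr (Multiplicative.ofAdd 1) := by
  ext <;> rfl

lemma lift_conj (k : ℤ) :
    (FreeGroup.lift (Sgen A v)) ((FreeGroup.of (1 : Fin 2)) ^ k * FreeGroup.of 0
        * ((FreeGroup.of (1 : Fin 2)) ^ k)⁻¹)
      = SemidirectProduct.inl (Multiplicative.ofAdd
          (((A ^ k : GL2Z) : Matrix (Fin 2) (Fin 2) ℤ).mulVec v)) := by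
  rw [_root_.map_mul, _root_.map_mul, map_inv, map_zpow, FreeGroup.lift_apply_of, FreeGroup.lift_apply_of,
    Sgen_zero, Sgen_one, ← map_zpow SemidirectProduct.inr, ← map_inv]
  have h1 : (Multiplicative.ofAdd (1:ℤ)) ^ k = Multiplicative.ofAdd k := by
    rw [← ofAdd_zsmul]; norm_num
  rw [h1, ← SemidirectProduct.inl_aut, phiA_apply]

end NEproof

namespace NEproof
variable (A : GL2Z) (v v' : Fin 2 → ℤ)

lemma backward
    (h : ∃ k : ℤ, v' = ((A ^ k : GL2Z) : Matrix (Fin 2) (Fin 2) ℤ).mulVec v ∨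
        v' = -((A ^ k : GL2Z) : Matrix (Fin 2) (Fin 2) ℤ).mulVec v) :
    NielsenEquiv (Sgen A v) (Sgen A v') := by
  obtain ⟨k, hk | hk⟩ := h
  · refine ⟨MulAut.conj ((FreeGroup.of (1 : Fin 2)) ^ k), ?_⟩
    apply FreeGroup.ext_hom
    intro i
    fin_cases i
    · show (FreeGroup.lift (Sgen A v)) (MulAut.conj _ (FreeGroup.of 0)) = _
      rw [MulAut.conj_apply, lift_conj, ← hk]
      simp [Sgen_zero]
    · show (FreeGroup.lift (Sgen A v)) (MulAut.conj _ (FreeGroup.of 1)) = _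
      rw [MulAut.conj_apply, show (FreeGroup.of (1 : Fin 2)) ^ k * FreeGroup.of 1 *
        ((FreeGroup.of (1 : Fin 2)) ^ k)⁻¹ = FreeGroup.of 1 by group]
      simp
  · refine ⟨invAut.trans (MulAut.conj ((FreeGroup.of (1 : Fin 2)) ^ k)), ?_⟩
    apply FreeGroup.ext_hom
    intro i
    fin_cases i
    · show (FreeGroup.lift (Sgen A v)) (MulAut.conj _ (invAut (FreeGroup.of 0))) = _
      have h0 : invAut (FreeGroup.of (0 : Fin 2)) = (FreeGroup.of (0 : Fin 2))⁻¹ := by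
        show nu (FreeGroup.of 0) = _
        simp [nu]
      rw [h0, map_inv, map_inv, MulAut.conj_apply, lift_conj]
      rw [← map_inv SemidirectProduct.inl, ← ofAdd_neg, ← hk]
      simp [Sgen_zero]
    · show (FreeGroup.lift (Sgen A v)) (MulAut.conj _ (invAut (FreeGroup.of 1))) = _
      have h1 : invAut (FreeGroup.of (1 : Fin 2)) = FreeGroup.of (1 : Fin 2) := by
        show nu (FreeGroup.of 1) = _
        simp [nu]
      rw [h1, MulAut.conj_apply, show (FreeGroup.of (1 : Fin 2)) ^ k * FreeGroup.of 1 *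
        ((FreeGroup.of (1 : Fin 2)) ^ k)⁻¹ = FreeGroup.of 1 by group]
      simp

end NEproof

namespace NEproof
open SemidirectProduct
variable (A : GL2Z) (v v' : Fin 2 → ℤ)

noncomputable def rhoF : FreeGroup (Fin 2) →* Gp :=
  FreeGroup.lift ![⟨.ofAdd ((1:Lam), (0:Lam)), 1⟩, ⟨.ofAdd ((0:Lam), (1:Lam)), .ofAdd 1⟩]

noncomputable def Ea (w : FreeGroup (Fin 2)) : Lam := ((rhoF w).left.toAdd).1
noncomputable def Eb (w : FreeGroup (Fin 2)) : Lam := ((rhoF w).left.toAdd).2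
noncomputable def nF (w : FreeGroup (Fin 2)) : ℤ := (rhoF w).right.toAdd

lemma rhoF_of0 : rhoF (FreeGroup.of 0) = ⟨.ofAdd ((1:Lam), (0:Lam)), 1⟩ := by
  rw [rhoF, FreeGroup.lift_apply_of]; rfl

lemma rhoF_of1 : rhoF (FreeGroup.of 1) = ⟨.ofAdd ((0:Lam), (1:Lam)), .ofAdd 1⟩ := by
  rw [rhoF, FreeGroup.lift_apply_of]; rfl

lemma Ea_of0 : Ea (FreeGroup.of 0) = 1 := by rw [Ea, rhoF_of0]; rfl
lemma Ea_of1 : Ea (FreeGroup.of 1) = 0 := by rw [Ea, rhoF_of1]; rfl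
lemma Eb_of0 : Eb (FreeGroup.of 0) = 0 := by rw [Eb, rhoF_of0]; rfl
lemma Eb_of1 : Eb (FreeGroup.of 1) = 1 := by rw [Eb, rhoF_of1]; rfl
lemma nF_of0 : nF (FreeGroup.of 0) = 0 := by rw [nF, rhoF_of0]; rfl
lemma nF_of1 : nF (FreeGroup.of 1) = 1 := by rw [nF, rhoF_of1]; rfl

lemma Ea_one : Ea 1 = 0 := by rw [Ea, _root_.map_one]; rfl
lemma Eb_one : Eb 1 = 0 := by rw [Eb, _root_.map_one]; rfl
lemma nF_one : nF 1 = 0 := by rw [nF, _root_.map_one]; rfl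

lemma nF_mul (u w : FreeGroup (Fin 2)) : nF (u * w) = nF u + nF w := by
  rw [nF, _root_.map_mul, mul_right, nF, nF]; rfl

lemma left_mul (u w : FreeGroup (Fin 2)) :
    (rhoF (u * w)).left = (rhoF u).left *
      psi (.ofAdd (nF u)) (.ofAdd ((rhoF w).left.toAdd)) := by
  rw [_root_.map_mul, mul_left, nF, ofAdd_toAdd, ofAdd_toAdd]

lemma Ea_mul (u w : FreeGroup (Fin 2)) : Ea (u * w) = Ea u + T (nF u) * Ea w := by
  rw [Ea, left_mul, psi_apply, toAdd_mul, toAdd_ofAdd]; rfl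

lemma Eb_mul (u w : FreeGroup (Fin 2)) : Eb (u * w) = Eb u + T (nF u) * Eb w := by
  rw [Eb, left_mul, psi_apply, toAdd_mul, toAdd_ofAdd]; rfl

lemma nF_inv (w : FreeGroup (Fin 2)) : nF w⁻¹ = -nF w := by
  rw [nF, _root_.map_inv, inv_right, nF]; rfl

lemma T_mul_T_cancel (n : ℤ) : (T (-n) : Lam) * T n = 1 := by rw [← T_add]; norm_num

lemma Ea_inv (w : FreeGroup (Fin 2)) : Ea w⁻¹ = -(T (-nF w) * Ea w) := by
  have h0 : Ea (w * w⁻¹) = 0 := by rw [mul_inv_cancel, Ea_one]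
  rw [Ea_mul] at h0
  linear_combination T (-nF w) * h0 - Ea w⁻¹ * T_mul_T_cancel (nF w)

lemma Eb_inv (w : FreeGroup (Fin 2)) : Eb w⁻¹ = -(T (-nF w) * Eb w) := by
  have h0 : Eb (w * w⁻¹) = 0 := by rw [mul_inv_cancel, Eb_one]
  rw [Eb_mul] at h0
  linear_combination T (-nF w) * h0 - Eb w⁻¹ * T_mul_T_cancel (nF w)

end NEproof

namespace NEproof
open SemidirectProduct
variable (A : GL2Z) (v v' : Fin 2 → ℤ)

lemma right_eq (w : FreeGroup (Fin 2)) :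
    (FreeGroup.lift (Sgen A v) w).right = .ofAdd (nF w) := by
  have h : (rightHom.comp (FreeGroup.lift (Sgen A v)) : FreeGroup (Fin 2) →* Multiplicative ℤ)
      = rightHom.comp rhoF := by
    apply FreeGroup.ext_hom
    intro i
    fin_cases i <;>
      simp only [MonoidHom.comp_apply, FreeGroup.lift_apply_of, rhoF, rightHom_eq_right] <;> rfl
  have := congrFun (congrArg DFunLike.coe h) w
  simp only [MonoidHom.comp_apply, rightHom_eq_right] at this
  rw [this, nF, ofAdd_toAdd]

lemma left_mul_S (u w : FreeGroup (Fin 2)) :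
    (FreeGroup.lift (Sgen A v) (u * w)).left = (FreeGroup.lift (Sgen A v) u).left *
      phiA A (.ofAdd (nF u)) (.ofAdd ((FreeGroup.lift (Sgen A v) w).left.toAdd)) := by
  rw [_root_.map_mul, mul_left, right_eq, ofAdd_toAdd]

/-- The fundamental formula: the `ℤ²`-part of `lift S w` equals `θ(∂w/∂a) v`. -/
lemma fund (w : FreeGroup (Fin 2)) :
    (FreeGroup.lift (Sgen A v) w).left = .ofAdd ((theta A (Ea w)).mulVec v) := by
  induction w using FreeGroup.induction_on with
  | C1 => rw [_root_.map_one, Ea_one, _root_.map_zero, Matrix.zero_mulVec]; rfl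
  | of i =>
      fin_cases i
      · show (FreeGroup.lift (Sgen A v) (FreeGroup.of 0)).left
            = .ofAdd ((theta A (Ea (FreeGroup.of 0))).mulVec v)
        rw [FreeGroup.lift_apply_of, Ea_of0, _root_.map_one, Matrix.one_mulVec]; rfl
      · show (FreeGroup.lift (Sgen A v) (FreeGroup.of 1)).left
            = .ofAdd ((theta A (Ea (FreeGroup.of 1))).mulVec v)
        rw [FreeGroup.lift_apply_of, Ea_of1, _root_.map_zero, Matrix.zero_mulVec]; rfl
  | inv_of i ih =>
      have key : ∀ u : FreeGroup (Fin 2),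
          (FreeGroup.lift (Sgen A v) u).left = .ofAdd ((theta A (Ea u)).mulVec v) →
          (FreeGroup.lift (Sgen A v) u⁻¹).left = .ofAdd ((theta A (Ea u⁻¹)).mulVec v) := by
        intro u ih
        have h0 : (FreeGroup.lift (Sgen A v) (u * u⁻¹)).left = 1 := by
          rw [mul_inv_cancel, _root_.map_one]; rfl
        rw [left_mul_S, ih, phiA_apply] at h0
        have h1 : (theta A (Ea u)).mulVec v
            + ((A ^ nF u : GL2Z) : Matrix (Fin 2) (Fin 2) ℤ).mulVec
              ((FreeGroup.lift (Sgen A v) u⁻¹).left.toAdd) = 0 := h0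
        have h2 : (FreeGroup.lift (Sgen A v) u⁻¹).left.toAdd
            = -((A ^ (-nF u) : GL2Z) : Matrix (Fin 2) (Fin 2) ℤ).mulVec
              ((theta A (Ea u)).mulVec v) := by
          have h3 := congrArg
            (fun x => ((A ^ (-nF u) : GL2Z) : Matrix (Fin 2) (Fin 2) ℤ).mulVec x) h1
          simp only [Matrix.mulVec_add, Matrix.mulVec_mulVec, Matrix.mulVec_zero] at h3
          rw [← Units.val_mul, ← _root_.zpow_add] at h3
          simp only [neg_add_cancel, zpow_zero, Units.val_one, Matrix.one_mulVec] at h3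
          rw [← Matrix.mulVec_mulVec] at h3
          exact eq_neg_of_add_eq_zero_right h3
        rw [Ea_inv, map_neg, _root_.map_mul, theta_T, Matrix.neg_mulVec, ← Matrix.mulVec_mulVec,
          ← h2, ofAdd_toAdd]
      exact key _ ih
  | mul u w ihu ihw =>
      rw [left_mul_S, ihu, ihw, phiA_apply, Ea_mul, _root_.map_add, _root_.map_mul, theta_T,
        Matrix.add_mulVec, ← Matrix.mulVec_mulVec]
      rfl

end NEproof

namespace NEproof
open SemidirectProduct
variable (A : GL2Z) (v v' : Fin 2 → ℤ)

/-- The fundamental identity `ε(w) - 1 = (∂w/∂b)(T - 1)`. -/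
lemma fundId (w : FreeGroup (Fin 2)) : (T (nF w) : Lam) - 1 = Eb w * (T 1 - 1) := by
  induction w using FreeGroup.induction_on with
  | C1 => rw [nF_one, Eb_one, T_zero]; ring
  | of i =>
      fin_cases i
      · show (T (nF (FreeGroup.of 0)) : Lam) - 1 = Eb (FreeGroup.of 0) * (T 1 - 1)
        rw [nF_of0, Eb_of0, T_zero]; ring
      · show (T (nF (FreeGroup.of 1)) : Lam) - 1 = Eb (FreeGroup.of 1) * (T 1 - 1)
        rw [nF_of1, Eb_of1]; ring
  | inv_of i ih =>
      have key : ∀ u : FreeGroup (Fin 2), (T (nF u) : Lam) - 1 = Eb u * (T 1 - 1) →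
          (T (nF u⁻¹) : Lam) - 1 = Eb u⁻¹ * (T 1 - 1) := by
        intro u ih
        rw [nF_inv, Eb_inv]
        have h4 : (T (-nF u) : Lam) * T (nF u) = 1 := T_mul_T_cancel _
        linear_combination (-(T (-nF u) : Lam)) * ih + h4
      exact key _ ih
  | mul u w ihu ihw =>
      rw [nF_mul, Eb_mul, T_add]
      linear_combination ihu + (T (nF u) : Lam) * ihw

end NEproof

namespace NEproof
open SemidirectProduct
variable (A : GL2Z) (v v' : Fin 2 → ℤ)

/-- Chain rule for the Fox derivative along an `ε`-preserving endomorphism. -/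
lemma chain (f : FreeGroup (Fin 2) →* FreeGroup (Fin 2))
    (hn : ∀ w, nF (f w) = nF w) (w : FreeGroup (Fin 2)) :
    Ea (f w) = Ea w * Ea (f (FreeGroup.of 0)) + Eb w * Ea (f (FreeGroup.of 1)) := by
  set p := Ea (f (FreeGroup.of 0))
  set s := Ea (f (FreeGroup.of 1))
  induction w using FreeGroup.induction_on with
  | C1 => rw [_root_.map_one, Ea_one, Eb_one]; ring
  | of i =>
      fin_cases i
      · show Ea (f (FreeGroup.of 0)) = Ea (FreeGroup.of 0) * p + Eb (FreeGroup.of 0) * s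
        rw [Ea_of0, Eb_of0]; ring
      · show Ea (f (FreeGroup.of 1)) = Ea (FreeGroup.of 1) * p + Eb (FreeGroup.of 1) * s
        rw [Ea_of1, Eb_of1]; ring
  | inv_of i ih =>
      have key : ∀ u : FreeGroup (Fin 2), Ea (f u) = Ea u * p + Eb u * s →
          Ea (f u⁻¹) = Ea u⁻¹ * p + Eb u⁻¹ * s := by
        intro u ih
        rw [_root_.map_inv, Ea_inv, Ea_inv, Eb_inv, hn, ih]
        ring
      exact key _ ih
  | mul u w ihu ihw =>
      rw [_root_.map_mul, Ea_mul, Ea_mul, Eb_mul, hn, ihu, ihw]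
      ring

lemma forward
    (h : NielsenEquiv (Sgen A v) (Sgen A v')) :
    ∃ k : ℤ, v' = ((A ^ k : GL2Z) : Matrix (Fin 2) (Fin 2) ℤ).mulVec v ∨
        v' = -((A ^ k : GL2Z) : Matrix (Fin 2) (Fin 2) ℤ).mulVec v := by
  obtain ⟨φ, hφ⟩ := h
  -- ε ∘ φ = ε
  have hn : ∀ w, nF (φ.toMonoidHom w) = nF w := by
    have h1 : ∀ (u : Fin 2 → ℤ) (w : FreeGroup (Fin 2)),
        (FreeGroup.lift (Sgen A u) w).right = Multiplicative.ofAdd (nF w) := right_eq A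
    intro w
    have h2 := h1 v (φ.toMonoidHom w)
    have h3 : (FreeGroup.lift (Sgen A v)) (φ.toMonoidHom w) = (FreeGroup.lift (Sgen A v')) w := by
      rw [← hφ]; rfl
    rw [h3, h1 v'] at h2
    exact (Multiplicative.ofAdd.injective h2).symm
  -- the derivative of φ(a) is a unit
  have hb : Eb (φ.symm.toMonoidHom (FreeGroup.of 0)) = 0 := by
    have h4 := fundId (φ.symm.toMonoidHom (FreeGroup.of 0))
    have h5 : nF (φ.symm.toMonoidHom (FreeGroup.of 0)) = 0 := by
      have := hn (φ.symm.toMonoidHom (FreeGroup.of 0))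
      rw [show φ.toMonoidHom (φ.symm.toMonoidHom (FreeGroup.of 0)) = FreeGroup.of 0 from
        φ.apply_symm_apply _, nF_of0] at this
      exact this.symm
    rw [h5, T_zero, sub_self] at h4
    rcases mul_eq_zero.1 h4.symm with h6 | h6
    · exact h6
    · exact absurd h6 T_sub_one_ne_zero
  have hpu : Ea (φ.toMonoidHom (FreeGroup.of 0))
      * Ea (φ.symm.toMonoidHom (FreeGroup.of 0)) = 1 := by
    have h7 := chain φ.toMonoidHom hn (φ.symm.toMonoidHom (FreeGroup.of 0))
    rw [show φ.toMonoidHom (φ.symm.toMonoidHom (FreeGroup.of 0)) = FreeGroup.of (0 : Fin 2) from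
      φ.apply_symm_apply _, Ea_of0, hb, zero_mul, add_zero] at h7
    rw [mul_comm]
    exact h7.symm
  obtain ⟨k, hk⟩ := lam_unit hpu
  have h8 : Multiplicative.ofAdd v'
      = Multiplicative.ofAdd ((theta A (Ea (φ.toMonoidHom (FreeGroup.of 0)))).mulVec v) := by
    have h9 : (FreeGroup.lift (Sgen A v')) (FreeGroup.of 0)
        = (FreeGroup.lift (Sgen A v)) (φ.toMonoidHom (FreeGroup.of 0)) := by
      rw [← hφ]; rfl
    have h10 := congrArg SemidirectProduct.left h9
    rw [fund, fund, Ea_of0, _root_.map_one, Matrix.one_mulVec] at h10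
    exact h10
  have hv'' : v' = (theta A (Ea (φ.toMonoidHom (FreeGroup.of 0)))).mulVec v :=
    Multiplicative.ofAdd.injective h8
  rcases hk with hk | hk
  · exact ⟨k, Or.inl (by rw [hv'', hk, theta_T])⟩
  · exact ⟨k, Or.inr (by rw [hv'', hk, map_neg, theta_T, Matrix.neg_mulVec])⟩

end NEproof

/-- `H_A = ⟨A, -Id⟩ ≤ GL₂ℤ`. -/
def HA (A : GL2Z) : Subgroup GL2Z := Subgroup.closure {A, -1}

lemma HA_mem_iff (A B : GL2Z) : B ∈ HA A ↔ ∃ k : ℤ, B = A ^ k ∨ B = -(A ^ k) := by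
  constructor
  · intro hB
    induction hB using Subgroup.closure_induction with
    | mem x hx =>
        rcases hx with h | h
        · exact ⟨1, Or.inl (by rw [h, zpow_one])⟩
        · exact ⟨0, Or.inr (by rw [h, zpow_zero])⟩
    | one => exact ⟨0, Or.inl (zpow_zero A).symm⟩
    | mul x y hx hy ihx ihy =>
        obtain ⟨k, hk⟩ := ihx; obtain ⟨j, hj⟩ := ihy
        refine ⟨k + j, ?_⟩
        rcases hk with hk | hk <;> rcases hj with hj | hj <;>
          rw [hk, hj] <;> simp [← _root_.zpow_add] <;> ring_nf <;> simp [← _root_.zpow_add]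
    | inv x hx ihx =>
        obtain ⟨k, hk⟩ := ihx
        refine ⟨-k, ?_⟩
        rcases hk with hk | hk <;> rw [hk]
        · exact Or.inl (by rw [← _root_.zpow_neg])
        · exact Or.inr (by rw [inv_neg, ← _root_.zpow_neg])
  · rintro ⟨k, hk⟩
    have hA : A ∈ HA A := Subgroup.subset_closure (Set.mem_insert _ _)
    have hn : (-1 : GL2Z) ∈ HA A := Subgroup.subset_closure (Set.mem_insert_iff.2 (Or.inr rfl))
    rcases hk with hk | hk <;> rw [hk]
    · exact zpow_mem hA k
    · rw [show -(A ^ k) = (-1) * A ^ k by simp]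
      exact mul_mem hn (zpow_mem hA k)

lemma orbit_iff_HA (A : GL2Z) (v v' : Fin 2 → ℤ) :
    (∃ k : ℤ, v' = ((A ^ k : GL2Z) : Matrix (Fin 2) (Fin 2) ℤ).mulVec v ∨
        v' = -((A ^ k : GL2Z) : Matrix (Fin 2) (Fin 2) ℤ).mulVec v) ↔
      ∃ B ∈ HA A, (B : Matrix (Fin 2) (Fin 2) ℤ).mulVec v = v' := by
  constructor
  · rintro ⟨k, hk | hk⟩
    · exact ⟨A ^ k, (HA_mem_iff A _).2 ⟨k, Or.inl rfl⟩, hk.symm⟩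
    · refine ⟨-(A ^ k), (HA_mem_iff A _).2 ⟨k, Or.inr rfl⟩, ?_⟩
      rw [Units.val_neg, Matrix.neg_mulVec, hk]
  · rintro ⟨B, hB, hBv⟩
    obtain ⟨k, hk | hk⟩ := (HA_mem_iff A B).1 hB
    · exact ⟨k, Or.inl (by rw [← hBv, hk])⟩
    · exact ⟨k, Or.inr (by rw [← hBv, hk, Units.val_neg, Matrix.neg_mulVec])⟩


theorem nielsen_equiv_iff_same_orbit (A : GL2Z) (v v' : Fin 2 → ℤ)
    (hv : Submodule.span ℤ ({v, (A : Matrix (Fin 2) (Fin 2) ℤ).mulVec v} : Set (Fin 2 → ℤ)) = ⊤)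
    (hv' : Submodule.span ℤ
      ({v', (A : Matrix (Fin 2) (Fin 2) ℤ).mulVec v'} : Set (Fin 2 → ℤ)) = ⊤) :
    (NielsenEquiv (![⟨Multiplicative.ofAdd v, 1⟩, ⟨1, Multiplicative.ofAdd 1⟩] : Fin 2 → GA A)
        ![⟨Multiplicative.ofAdd v', 1⟩, ⟨1, Multiplicative.ofAdd 1⟩] ↔
      ∃ k : ℤ, v' = ((A ^ k : GL2Z) : Matrix (Fin 2) (Fin 2) ℤ).mulVec v ∨
        v' = -((A ^ k : GL2Z) : Matrix (Fin 2) (Fin 2) ℤ).mulVec v) ∧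
    (NielsenEquiv (![⟨Multiplicative.ofAdd v, 1⟩, ⟨1, Multiplicative.ofAdd 1⟩] : Fin 2 → GA A)
        ![⟨Multiplicative.ofAdd v', 1⟩, ⟨1, Multiplicative.ofAdd 1⟩] ↔
      ∃ B ∈ HA A, (B : Matrix (Fin 2) (Fin 2) ℤ).mulVec v = v') := by
  have main : NielsenEquiv (NEproof.Sgen A v) (NEproof.Sgen A v') ↔
      ∃ k : ℤ, v' = ((A ^ k : GL2Z) : Matrix (Fin 2) (Fin 2) ℤ).mulVec v ∨
        v' = -((A ^ k : GL2Z) : Matrix (Fin 2) (Fin 2) ℤ).mulVec v :=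
    ⟨NEproof.forward A v v', NEproof.backward A v v'⟩
  exact ⟨main, main.trans (orbit_iff_HA A v v')⟩
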